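/- The pseudometric d_acs induces a.c.s. convergence: for {A_n} ∈ 𝔈 and a family of matrix sequences ({B_{n,m}}_n)_m, one has d_acs({A_n}, {B_{n,m}}_n) → 0 as m → ∞ if and only if for every m there exist matrices N_{n,m}, R_{n,m} ∈ ℂ^{n×n}, an index n_m, and numbers ω(m), c(m) ≥ 0 with ω(m) → 0 and c(m) → 0 as m → ∞, such that A_n = B_{n,m} + N_{n,m} + R_{n,m}, ‖N_{n,m}‖ ≤ ω(m) (spectral norm), and rank(R_{n,m}) ≤ n·c(m) for all n > n_m. -/

import Mathlib

open MeasureTheory Filter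
open scoped ENNReal NNReal

/-- The singular values of a complex square matrix, arranged in non-increasing order:
`sv A 0 = σ₁(A) ≥ sv A 1 = σ₂(A) ≥ …` (the square roots of the eigenvalues of `Aᴴ * A`). -/
noncomputable def sv {n : ℕ} (A : Matrix (Fin n) (Fin n) ℂ) : Fin n → ℝ :=
  fun i =>
    (fun j => Real.sqrt ((Matrix.isHermitian_conjTranspose_mul_self A).eigenvalues j))
      (Tuple.sort (fun j => Real.sqrt ((Matrix.isHermitian_conjTranspose_mul_self A).eigenvalues j))
        i.rev)

/-- `p(A) := min_{1 ≤ i ≤ n} ((i-1)/n + σᵢ(A))` (here `i : Fin n` plays the role of `i-1`). -/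
noncomputable def pA {n : ℕ} (A : Matrix (Fin n) (Fin n) ℂ) : ℝ :=
  ⨅ i : Fin n, (((i : ℕ) : ℝ) / n + sv A i)

/-- `ρ({A_n}) := limsup_{n→∞} p(A_n)`, valued in `[0,∞]`. -/
noncomputable def rho (A : (n : ℕ) → Matrix (Fin n) (Fin n) ℂ) : ℝ≥0∞ :=
  Filter.limsup (fun n => ENNReal.ofReal (pA (A n))) Filter.atTop

/-- The a.c.s. pseudometric `d_acs({A_n},{B_n}) := ρ({A_n − B_n})`. -/
noncomputable def dacs (A B : (n : ℕ) → Matrix (Fin n) (Fin n) ℂ) : ℝ≥0∞ :=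
  rho (fun n => A n - B n)

/-- `{A_n} ∼_σ k` : the sequence `{A_n}` has spectral (singular value) symbol `k` on `D`. -/
def SpecSymb {d : ℕ} (D : Set (Fin d → ℝ)) (A : (n : ℕ) → Matrix (Fin n) (Fin n) ℂ)
    (k : (Fin d → ℝ) → ℂ) : Prop :=
  ∀ F : ℝ → ℂ, Continuous F → HasCompactSupport F →
    Filter.Tendsto (fun n : ℕ => (n : ℂ)⁻¹ * ∑ i : Fin n, F (sv (A n) i)) Filter.atTop
      (nhds ((volume D).toReal⁻¹ • ∫ x in D, F ‖k x‖))

/-- `p_m(f) := inf_{E ⊆ D measurable} ( |D∖E|/|D| + esssup_{x∈E} |f(x)| )`, valued in `[0,∞]`. -/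
noncomputable def pm {d : ℕ} (D : Set (Fin d → ℝ)) (f : (Fin d → ℝ) → ℂ) : ℝ≥0∞ :=
  ⨅ (E : Set (Fin d → ℝ)) (_ : MeasurableSet E) (_ : E ⊆ D),
    (volume (D \ E) / volume D + essSup (fun x => (‖f x‖₊ : ℝ≥0∞)) (volume.restrict E))

/-- `d_m(f,g) := p_m(f − g)`. -/
noncomputable def dm {d : ℕ} (D : Set (Fin d → ℝ)) (f g : (Fin d → ℝ) → ℂ) : ℝ≥0∞ :=
  pm D (fun x => f x - g x)

/-- A "group in 𝒞_D": a set `G` of pairs `({A_n}, k)` with `k` measurable and `{A_n} ∼_σ k`,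
closed under addition and negation. -/
def IsGroupIn {d : ℕ} (D : Set (Fin d → ℝ))
    (G : Set (((n : ℕ) → Matrix (Fin n) (Fin n) ℂ) × ((Fin d → ℝ) → ℂ))) : Prop :=
  (∀ p ∈ G, Measurable p.2 ∧ SpecSymb D p.1 p.2) ∧
  (∀ p ∈ G, ∀ q ∈ G, ((fun n => p.1 n + q.1 n), p.2 + q.2) ∈ G) ∧
  (∀ p ∈ G, ((fun n => -(p.1 n)), -p.2) ∈ G)

/-- The spectral norm of a matrix: its largest singular value. -/
noncomputable def specNorm {n : ℕ} (A : Matrix (Fin n) (Fin n) ℂ) : ℝ :=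
  ⨆ i : Fin n, sv A i


section AcsAux

open Matrix Finset

variable {n : ℕ}

/-- Sum of squared moduli of a complex vector. -/
noncomputable def nsq {n : ℕ} (x : Fin n → ℂ) : ℝ := ∑ i, Complex.normSq (x i)

lemma nsq_nonneg (x : Fin n → ℂ) : 0 ≤ nsq x :=
  Finset.sum_nonneg fun i _ => Complex.normSq_nonneg _

lemma star_dot (x : Fin n → ℂ) : star x ⬝ᵥ x = (nsq x : ℂ) := by
  simp only [dotProduct, nsq, Pi.star_apply, Complex.ofReal_sum]
  refine Finset.sum_congr rfl fun i _ => ?_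
  rw [Complex.star_def, mul_comm, Complex.mul_conj]

/-- Eigenvalues of `Cᴴ * C`. -/
noncomputable def evC {n : ℕ} (C : Matrix (Fin n) (Fin n) ℂ) : Fin n → ℝ :=
  (Matrix.isHermitian_conjTranspose_mul_self C).eigenvalues

/-- The eigenvector unitary of `Cᴴ * C`, as a matrix. -/
noncomputable def VC {n : ℕ} (C : Matrix (Fin n) (Fin n) ℂ) : Matrix (Fin n) (Fin n) ℂ :=
  ((Matrix.isHermitian_conjTranspose_mul_self C).eigenvectorUnitary : Matrix (Fin n) (Fin n) ℂ)

lemma evC_nonneg (C : Matrix (Fin n) (Fin n) ℂ) (j : Fin n) : 0 ≤ evC C j :=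
  Matrix.eigenvalues_conjTranspose_mul_self_nonneg C j

lemma VC_star_mul (C : Matrix (Fin n) (Fin n) ℂ) : star (VC C) * VC C = 1 :=
  Unitary.star_mul_self_of_mem
    ((Matrix.isHermitian_conjTranspose_mul_self C).eigenvectorUnitary).2

lemma VC_mul_star (C : Matrix (Fin n) (Fin n) ℂ) : VC C * star (VC C) = 1 :=
  Unitary.mul_star_self_of_mem
    ((Matrix.isHermitian_conjTranspose_mul_self C).eigenvectorUnitary).2

lemma VC_spectral (C : Matrix (Fin n) (Fin n) ℂ) :
    Cᴴ * C = VC C * Matrix.diagonal (fun j => (evC C j : ℂ)) * star (VC C) := by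
  have h := (Matrix.isHermitian_conjTranspose_mul_self C).spectral_theorem
  rw [Unitary.conjStarAlgAut_apply] at h
  exact h

lemma star_vecMul_VC (C : Matrix (Fin n) (Fin n) ℂ) (x : Fin n → ℂ) :
    star x ᵥ* VC C = star (star (VC C) *ᵥ x) := by
  rw [Matrix.star_mulVec, Matrix.star_eq_conjTranspose, Matrix.conjTranspose_conjTranspose]

lemma quad_a (C : Matrix (Fin n) (Fin n) ℂ) (x : Fin n → ℂ) :
    nsq (C *ᵥ x) = ∑ j, evC C j * Complex.normSq ((star (VC C) *ᵥ x) j) := by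
  set y := star (VC C) *ᵥ x with hy
  have key : (star (C *ᵥ x)) ⬝ᵥ (C *ᵥ x)
      = star y ⬝ᵥ (Matrix.diagonal (fun j => (evC C j : ℂ)) *ᵥ y) := by
    rw [Matrix.star_mulVec, ← Matrix.dotProduct_mulVec, Matrix.mulVec_mulVec, VC_spectral C,
      ← Matrix.mulVec_mulVec, ← Matrix.mulVec_mulVec, Matrix.dotProduct_mulVec _ (VC C),
      star_vecMul_VC, ← hy]
  have lhs : (star (C *ᵥ x)) ⬝ᵥ (C *ᵥ x) = ((nsq (C *ᵥ x) : ℝ) : ℂ) := star_dot _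
  have rhs : star y ⬝ᵥ (Matrix.diagonal (fun j => (evC C j : ℂ)) *ᵥ y)
      = ((∑ j, evC C j * Complex.normSq (y j) : ℝ) : ℂ) := by
    simp only [dotProduct, Matrix.mulVec_diagonal, Pi.star_apply, Complex.ofReal_sum]
    refine Finset.sum_congr rfl fun j _ => ?_
    rw [Complex.star_def, Complex.ofReal_mul, ← Complex.mul_conj]
    ring
  have := lhs.symm.trans (key.trans rhs)
  exact_mod_cast this

lemma quad_b (C : Matrix (Fin n) (Fin n) ℂ) (x : Fin n → ℂ) :
    nsq x = nsq (star (VC C) *ᵥ x) := by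
  set y := star (VC C) *ᵥ x with hy
  have h1 : star y = star x ᵥ* VC C := by
    rw [hy, Matrix.star_mulVec, Matrix.star_eq_conjTranspose, Matrix.conjTranspose_conjTranspose]
  have key : star y ⬝ᵥ y = star x ⬝ᵥ x := by
    rw [h1, hy, ← Matrix.dotProduct_mulVec, Matrix.mulVec_mulVec, VC_mul_star,
      Matrix.one_mulVec]
  have l1 : star y ⬝ᵥ y = ((nsq y : ℝ) : ℂ) := star_dot _
  have l2 : star x ⬝ᵥ x = ((nsq x : ℝ) : ℂ) := star_dot _
  rw [l1, l2] at key
  exact_mod_cast key.symm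

lemma quad_c (C : Matrix (Fin n) (Fin n) ℂ) (z : Fin n → ℂ) :
    star (VC C) *ᵥ (VC C *ᵥ z) = z := by
  rw [Matrix.mulVec_mulVec, VC_star_mul, Matrix.one_mulVec]

lemma sv_eq (C : Matrix (Fin n) (Fin n) ℂ) (i : Fin n) :
    sv C i = ((fun j => Real.sqrt (evC C j)) ∘
      (Tuple.sort fun j => Real.sqrt (evC C j))) i.rev := rfl

lemma sv_nonneg (C : Matrix (Fin n) (Fin n) ℂ) (i : Fin n) : 0 ≤ sv C i :=
  Real.sqrt_nonneg _

lemma monotone_count (g : Fin n → ℝ) (hg : Monotone g) (t : ℝ) (i : Fin n) :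
    t < g i.rev ↔ (i : ℕ) < (Finset.univ.filter fun j => t < g j).card := by
  have hrev : (i.rev : ℕ) = n - (i + 1) := Fin.val_rev i
  have hi := i.isLt
  constructor
  · intro h
    have hsub : Finset.Ici i.rev ⊆ Finset.univ.filter fun j => t < g j := by
      intro j hj
      simp only [Finset.mem_filter, Finset.mem_univ, true_and]
      exact lt_of_lt_of_le h (hg (Finset.mem_Ici.mp hj))
    have h2 := Finset.card_le_card hsub
    rw [Fin.card_Ici] at h2
    omega
  · intro h
    by_contra h'
    push_neg at h'
    have hsub : (Finset.univ.filter fun j => t < g j) ⊆ Finset.Ioi i.rev := by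
      intro j hj
      simp only [Finset.mem_filter, Finset.mem_univ, true_and] at hj
      rcases lt_or_ge i.rev j with hc | hc
      · exact Finset.mem_Ioi.mpr hc
      · exact absurd hj (not_lt.mpr (le_trans (hg hc) (le_of_not_gt fun hh => absurd h' (not_le.mpr hh))))
    have h2 := Finset.card_le_card hsub
    rw [Fin.card_Ioi] at h2
    omega

lemma card_filter_comp_perm (σ : Equiv.Perm (Fin n)) (p : Fin n → Prop) [DecidablePred p] :
    (Finset.univ.filter fun i => p (σ i)).card = (Finset.univ.filter p).card := by
  refine Finset.card_bij (fun i _ => σ i) ?_ ?_ ?_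
  · intro a ha
    simp only [Finset.mem_filter, Finset.mem_univ, true_and] at ha ⊢
    exact ha
  · intro a _ b _ hab
    exact σ.injective hab
  · intro b hb
    simp only [Finset.mem_filter, Finset.mem_univ, true_and] at hb ⊢
    exact ⟨σ.symm b, by simpa using hb, by simp⟩

lemma sv_lt_iff (C : Matrix (Fin n) (Fin n) ℂ) (t : ℝ) (i : Fin n) :
    t < sv C i ↔ (i : ℕ) < (Finset.univ.filter fun j => t < Real.sqrt (evC C j)).card := by
  classical
  have hm := Tuple.monotone_sort (fun j => Real.sqrt (evC C j))
  rw [sv_eq, monotone_count _ hm t i]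
  exact Iff.of_eq (congrArg _ (card_filter_comp_perm (Tuple.sort fun j => Real.sqrt (evC C j))
    (fun j => t < Real.sqrt (evC C j))))

lemma specNorm_le_iff (C : Matrix (Fin n) (Fin n) ℂ) {t : ℝ} (ht : 0 ≤ t) :
    specNorm C ≤ t ↔ ∀ j, Real.sqrt (evC C j) ≤ t := by
  constructor
  · intro h j
    set σ : Fin n → Fin n := fun i => Tuple.sort (fun j => Real.sqrt (evC C j)) i.rev with hσ
    have hsurj : ∃ i, σ i = j :=
      ⟨((Tuple.sort fun j => Real.sqrt (evC C j)).symm j).rev, by simp [hσ, Fin.rev_rev]⟩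
    obtain ⟨i, hi⟩ := hsurj
    have h1 : sv C i = Real.sqrt (evC C (σ i)) := rfl
    have h2 : sv C i ≤ specNorm C :=
      le_ciSup (Set.Finite.bddAbove (Set.finite_range _)) i
    rw [h1, hi] at h2
    exact h2.trans h
  · intro h
    rcases isEmpty_or_nonempty (Fin n) with he | hne
    · rw [specNorm, Real.iSup_of_isEmpty]
      exact ht
    · exact ciSup_le fun i => h _

lemma quad_of_specNorm {C : Matrix (Fin n) (Fin n) ℂ} {t : ℝ} (ht : 0 ≤ t)
    (h : specNorm C ≤ t) (x : Fin n → ℂ) : nsq (C *ᵥ x) ≤ t ^ 2 * nsq x := by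
  have hev : ∀ j, evC C j ≤ t ^ 2 := by
    intro j
    have h1 := (specNorm_le_iff C ht).1 h j
    calc evC C j = Real.sqrt (evC C j) ^ 2 := (Real.sq_sqrt (evC_nonneg C j)).symm
      _ ≤ t ^ 2 := by nlinarith [Real.sqrt_nonneg (evC C j)]
  rw [quad_a, quad_b C x, nsq, Finset.mul_sum]
  refine Finset.sum_le_sum fun j _ => ?_
  exact mul_le_mul_of_nonneg_right (hev j) (Complex.normSq_nonneg _)

lemma sum_normSq_single (g : Fin n → ℝ) (j : Fin n) :
    ∑ k, g k * Complex.normSq ((Pi.single j 1 : Fin n → ℂ) k) = g j := by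
  rw [Finset.sum_eq_single j]
  · rw [Pi.single_eq_same]
    simp
  · intro b _ hbj
    rw [Pi.single_eq_of_ne hbj]
    simp
  · intro h
    exact absurd (Finset.mem_univ j) h

lemma specNorm_le_of_quad {C : Matrix (Fin n) (Fin n) ℂ} {t : ℝ} (ht : 0 ≤ t)
    (h : ∀ x, nsq (C *ᵥ x) ≤ t ^ 2 * nsq x) : specNorm C ≤ t := by
  rw [specNorm_le_iff C ht]
  intro j
  have := h (VC C *ᵥ Pi.single j 1)
  rw [quad_a, quad_b C (VC C *ᵥ Pi.single j 1), quad_c] at this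
  rw [show (∑ k, evC C k * Complex.normSq ((Pi.single j 1 : Fin n → ℂ) k)) = evC C j from
    sum_normSq_single _ j] at this
  have h1 : nsq (Pi.single j (1 : ℂ)) = 1 := by
    have := sum_normSq_single (fun _ : Fin n => (1 : ℝ)) j
    simpa [nsq] using this
  rw [h1, mul_one] at this
  calc Real.sqrt (evC C j) ≤ Real.sqrt (t ^ 2) := Real.sqrt_le_sqrt this
    _ = t := Real.sqrt_sq ht

lemma specNorm_zero_le : specNorm (0 : Matrix (Fin n) (Fin n) ℂ) ≤ 0 := by
  refine specNorm_le_of_quad le_rfl fun x => ?_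
  simp [nsq, Matrix.zero_mulVec]

lemma sv_le_of_decomp (N R : Matrix (Fin n) (Fin n) ℂ) {k : ℕ} (hk : k < n)
    (hrank : R.rank ≤ k) {t : ℝ} (ht : 0 ≤ t) (hN : specNorm N ≤ t) :
    sv (N + R) ⟨k, hk⟩ ≤ t := by
  classical
  by_contra h'
  push_neg at h'
  set C := N + R with hC
  rw [sv_lt_iff] at h'
  set S := Finset.univ.filter (fun j => t < Real.sqrt (evC C j)) with hS
  obtain ⟨S', hS'sub, hS'card⟩ := Finset.exists_subset_card_eq
    (show k + 1 ≤ S.card by simpa using h')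
  set g : Fin (k+1) → Fin n := fun q => ((S'.orderIsoOfFin hS'card q) : Fin n) with hg
  have hginj : Function.Injective g := fun a b hab =>
    (S'.orderIsoOfFin hS'card).injective (Subtype.ext hab)
  have hgmem : ∀ q, t ^ 2 < evC C (g q) := by
    intro q
    have h1 : g q ∈ S := hS'sub (S'.orderIsoOfFin hS'card q).2
    rw [hS, Finset.mem_filter] at h1
    have h2 := h1.2
    nlinarith [Real.sq_sqrt (evC_nonneg C (g q)), Real.sqrt_nonneg (evC C (g q))]
  set P : Matrix (Fin n) (Fin (k+1)) ℂ := Matrix.of fun j q => if g q = j then 1 else 0 with hP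
  set M := VC C * P with hM
  have hrankM : (R * M).rank ≤ k := le_trans (Matrix.rank_mul_le_left R M) hrank
  have hker : LinearMap.ker (R * M).mulVecLin ≠ ⊥ := by
    intro hbot
    have h1 := LinearMap.finrank_range_add_finrank_ker (R * M).mulVecLin
    rw [hbot, finrank_bot, add_zero, Module.finrank_fin_fun] at h1
    have h2 : (R * M).rank = k + 1 := h1
    omega
  obtain ⟨c, hcker, hc0⟩ := (Submodule.ne_bot_iff _).1 hker
  have hRMc : (R * M) *ᵥ c = 0 := hcker
  set c' : Fin n → ℂ := P *ᵥ c with hc'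
  have hc'g : ∀ q, c' (g q) = c q := by
    intro q
    rw [hc']
    simp only [Matrix.mulVec, dotProduct, hP, Matrix.of_apply, ite_mul, one_mul, zero_mul]
    rw [Finset.sum_eq_single q]
    · rw [if_pos rfl]
    · intro b _ hbq
      exact if_neg fun hgb => hbq (hginj hgb)
    · intro h
      exact absurd (Finset.mem_univ q) h
  have hc'supp : ∀ j, c' j ≠ 0 → ∃ q, g q = j := by
    intro j hj
    by_contra hno
    push_neg at hno
    apply hj
    rw [hc']
    simp only [Matrix.mulVec, dotProduct, hP, Matrix.of_apply, ite_mul, one_mul, zero_mul]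
    exact Finset.sum_eq_zero fun q _ => if_neg (hno q)
  set x := VC C *ᵥ c' with hx
  have hMc : M *ᵥ c = x := by
    rw [hM, hx, hc', ← Matrix.mulVec_mulVec]
  have hRx : R *ᵥ x = 0 := by
    rw [← hMc, Matrix.mulVec_mulVec, hRMc]
  have hCx : C *ᵥ x = N *ᵥ x := by
    rw [hC, Matrix.add_mulVec, hRx, add_zero]
  have hquad := quad_of_specNorm ht hN x
  rw [← hCx, quad_a, quad_b C x] at hquad
  rw [show star (VC C) *ᵥ x = c' from quad_c C c'] at hquad
  have hterm : ∀ j ∈ Finset.univ, 0 ≤ (evC C j - t ^ 2) * Complex.normSq (c' j) := by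
    intro j _
    rcases eq_or_ne (c' j) 0 with h0 | h0
    · simp [h0]
    · obtain ⟨q, rfl⟩ := hc'supp j h0
      have := hgmem q
      have := Complex.normSq_nonneg (c' (g q))
      nlinarith
  have hsum : ∑ j, (evC C j - t ^ 2) * Complex.normSq (c' j) ≤ 0 := by
    have expand : ∑ j, (evC C j - t ^ 2) * Complex.normSq (c' j)
        = (∑ j, evC C j * Complex.normSq (c' j)) - t ^ 2 * (∑ j, Complex.normSq (c' j)) := by
      rw [Finset.mul_sum, ← Finset.sum_sub_distrib]
      refine Finset.sum_congr rfl fun j _ => by ring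
    rw [expand]
    have : nsq c' = ∑ j, Complex.normSq (c' j) := rfl
    rw [← this]
    linarith
  have hzero := (Finset.sum_eq_zero_iff_of_nonneg hterm).1
    (le_antisymm hsum (Finset.sum_nonneg hterm))
  obtain ⟨q, hq⟩ := Function.ne_iff.1 hc0
  have h1 := hzero (g q) (Finset.mem_univ _)
  rw [hc'g q] at h1
  rcases mul_eq_zero.1 h1 with h2 | h2
  · have := hgmem q
    nlinarith
  · exact hq (by simpa using Complex.normSq_eq_zero.1 h2)

lemma exists_decomp (C : Matrix (Fin n) (Fin n) ℂ) (i : Fin n) :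
    ∃ N R : Matrix (Fin n) (Fin n) ℂ,
      C = N + R ∧ specNorm N ≤ sv C i ∧ R.rank ≤ (i : ℕ) := by
  classical
  set t := sv C i with htdef
  have ht : 0 ≤ t := sv_nonneg C i
  set S := Finset.univ.filter (fun j => t < Real.sqrt (evC C j)) with hSdef
  have hcard : S.card ≤ (i : ℕ) := by
    by_contra h
    push_neg at h
    exact absurd ((sv_lt_iff C t i).2 h) (lt_irrefl t)
  set e : Fin n → ℂ := fun j => if j ∈ S then 1 else 0 with hedef
  set P := VC C * Matrix.diagonal e * star (VC C) with hPdef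
  refine ⟨C * (1 - P), C * P, ?_, ?_, ?_⟩
  · rw [← Matrix.mul_add]
    simp
  · apply specNorm_le_of_quad ht
    intro x
    set y := star (VC C) *ᵥ x with hydef
    have hNx : (C * (1 - P)) *ᵥ x = C *ᵥ ((1 - P) *ᵥ x) := (Matrix.mulVec_mulVec _ _ _).symm
    rw [hNx, quad_a]
    have hkey : star (VC C) * (1 - P) = (1 - Matrix.diagonal e) * star (VC C) := by
      rw [Matrix.mul_sub, Matrix.sub_mul, Matrix.mul_one, Matrix.one_mul, hPdef]
      congr 1
      calc star (VC C) * (VC C * Matrix.diagonal e * star (VC C))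
          = (star (VC C) * VC C) * (Matrix.diagonal e * star (VC C)) := by
            simp only [mul_assoc]
        _ = Matrix.diagonal e * star (VC C) := by rw [VC_star_mul, one_mul]
    have hw : star (VC C) *ᵥ ((1 - P) *ᵥ x) = fun j => (1 - e j) * y j := by
      rw [Matrix.mulVec_mulVec, hkey, ← Matrix.mulVec_mulVec, ← hydef]
      ext j
      simp only [Matrix.sub_mulVec, Matrix.one_mulVec, Pi.sub_apply, Matrix.mulVec_diagonal]
      ring
    rw [hw]
    have hb : nsq x = nsq y := quad_b C x
    rw [hb, nsq, Finset.mul_sum]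
    refine Finset.sum_le_sum fun j _ => ?_
    show evC C j * Complex.normSq ((1 - e j) * y j) ≤ t ^ 2 * Complex.normSq (y j)
    by_cases hj : j ∈ S
    · have : e j = 1 := if_pos hj
      rw [this]
      simp only [sub_self, zero_mul, Complex.normSq_zero, mul_zero]
      exact mul_nonneg (sq_nonneg t) (Complex.normSq_nonneg _)
    · have h1 : Real.sqrt (evC C j) ≤ t := by
        by_contra hcon
        push_neg at hcon
        exact hj (by rw [hSdef]; exact Finset.mem_filter.2 ⟨Finset.mem_univ _, hcon⟩)
      have h2 : evC C j ≤ t ^ 2 := by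
        nlinarith [Real.sq_sqrt (evC_nonneg C j), Real.sqrt_nonneg (evC C j)]
      have : e j = 0 := if_neg hj
      rw [this, sub_zero, one_mul]
      exact mul_le_mul_of_nonneg_right h2 (Complex.normSq_nonneg _)
  · have h1 : (C * P).rank ≤ (Matrix.diagonal e).rank := by
      calc (C * P).rank ≤ P.rank := Matrix.rank_mul_le_right _ _
        _ ≤ (VC C * Matrix.diagonal e).rank := Matrix.rank_mul_le_left _ _
        _ ≤ (Matrix.diagonal e).rank := Matrix.rank_mul_le_right _ _
    have h2 : (Matrix.diagonal e).rank = S.card := by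
      rw [Matrix.rank_diagonal, Fintype.card_subtype]
      congr 1
      ext j
      simp only [Finset.mem_filter, Finset.mem_univ, true_and, hedef]
      by_cases hj : j ∈ S <;> simp [hj]
    exact le_trans (h1.trans_eq h2) hcard

lemma pA_le (C : Matrix (Fin n) (Fin n) ℂ) (i : Fin n) :
    pA C ≤ ((i : ℕ) : ℝ) / n + sv C i :=
  ciInf_le (Set.Finite.bddBelow (Set.finite_range _)) i

lemma pA_lt_elim {C : Matrix (Fin n) (Fin n) ℂ} (hn : 0 < n) {w : ℝ} (h : pA C < w) :
    ∃ i : Fin n, ((i : ℕ) : ℝ) / n + sv C i < w := by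
  have : Nonempty (Fin n) := ⟨⟨0, hn⟩⟩
  obtain ⟨i, hi⟩ := exists_eq_ciInf_of_finite (f := fun i : Fin n => ((i : ℕ) : ℝ) / n + sv C i)
  exact ⟨i, by rw [pA] at h; rw [← hi] at h; exact h⟩

end AcsAux

/-- `d_acs` induces a.c.s. convergence. -/
theorem dacs_tendsto_iff_acs (A : (n : ℕ) → Matrix (Fin n) (Fin n) ℂ)
    (B : ℕ → (n : ℕ) → Matrix (Fin n) (Fin n) ℂ) :
    Filter.Tendsto (fun m => dacs A (B m)) Filter.atTop (nhds 0) ↔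
      ∃ (N R : (m : ℕ) → (n : ℕ) → Matrix (Fin n) (Fin n) ℂ) (nm : ℕ → ℕ) (ω c : ℕ → ℝ),
        (∀ m, 0 ≤ ω m) ∧ (∀ m, 0 ≤ c m) ∧
        Filter.Tendsto ω Filter.atTop (nhds 0) ∧
        Filter.Tendsto c Filter.atTop (nhds 0) ∧
        (∀ m n : ℕ, nm m < n →
          A n = B m n + N m n + R m n ∧
          specNorm (N m n) ≤ ω m ∧
          ((Matrix.rank (R m n) : ℝ) ≤ (n : ℝ) * c m)) := by
  constructor
  · intro T
    classical
    set L : ℕ → ℝ≥0∞ := fun m => dacs A (B m) with hL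
    set w : ℕ → ℝ := fun m => if L m = ⊤ then 1 else (L m).toReal + 1 / (m + 1) with hw
    have hw0 : ∀ m, 0 ≤ w m := by
      intro m
      rw [hw]
      dsimp only
      split
      · norm_num
      · positivity
    have hwt : Filter.Tendsto w Filter.atTop (nhds 0) := by
      have h2 : ∀ᶠ m in Filter.atTop, L m ≤ 1 :=
        (ENNReal.tendsto_nhds_zero.1 T) 1 (by norm_num)
      have h1 : ∀ᶠ m in Filter.atTop, w m = (L m).toReal + 1 / (m + 1) := by
        filter_upwards [h2] with m hm
        rw [hw]
        dsimp only
        rw [if_neg (by intro h; rw [h] at hm; exact (by simp at hm))]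
      have hA1 : Filter.Tendsto (fun m => (L m).toReal) Filter.atTop (nhds 0) := by
        have := (ENNReal.tendsto_toReal (a := 0) (by simp)).comp T
        simpa [Function.comp_def] using this
      have h3 : Filter.Tendsto (fun m : ℕ => (L m).toReal + 1 / ((m : ℝ) + 1)) Filter.atTop
          (nhds 0) := by
        have := hA1.add tendsto_one_div_add_atTop_nhds_zero_nat
        simpa using this
      exact Filter.Tendsto.congr' (Filter.EventuallyEq.symm h1) h3
    have key : ∀ m : ℕ, ∃ nmm : ℕ, ∀ n : ℕ, nmm < n →
        ∃ NR : Matrix (Fin n) (Fin n) ℂ × Matrix (Fin n) (Fin n) ℂ,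
          A n = B m n + NR.1 + NR.2 ∧ specNorm NR.1 ≤ w m ∧
            ((NR.2.rank : ℝ) ≤ (n : ℝ) * w m) := by
      intro m
      by_cases hm : L m = ⊤
      · refine ⟨0, fun n _ => ⟨⟨0, A n - B m n⟩, by rw [add_zero, add_sub_cancel], ?_, ?_⟩⟩
        · rw [hw]
          dsimp only
          rw [if_pos hm]
          exact specNorm_zero_le.trans (by norm_num)
        · rw [hw]
          dsimp only
          rw [if_pos hm, mul_one]
          have h4 : (A n - B m n).rank ≤ n :=
            (Matrix.rank_le_card_width _).trans (le_of_eq (Fintype.card_fin n))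
          exact_mod_cast h4
      · have hwpos : 0 < w m := by
          rw [hw]
          dsimp only
          rw [if_neg hm]
          positivity
        have hlt : L m < ENNReal.ofReal (w m) := by
          conv_lhs => rw [← ENNReal.ofReal_toReal hm]
          rw [ENNReal.ofReal_lt_ofReal_iff hwpos, hw]
          dsimp only
          rw [if_neg hm]
          have h9 : (0 : ℝ) < 1 / ((m : ℝ) + 1) := by positivity
          linarith
        have hev : ∀ᶠ n in Filter.atTop,
            ENNReal.ofReal (pA (A n - B m n)) < ENNReal.ofReal (w m) :=
          Filter.eventually_lt_of_limsup_lt hlt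
        obtain ⟨n₀, hn₀⟩ := Filter.eventually_atTop.1 hev
        refine ⟨max n₀ 1, fun n hn => ?_⟩
        have hn1 : 0 < n := by have := le_max_right n₀ 1; omega
        have hpa : pA (A n - B m n) < w m := by
          have h4 := hn₀ n (le_of_lt (lt_of_le_of_lt (le_max_left n₀ 1) hn))
          exact (ENNReal.ofReal_lt_ofReal_iff hwpos).1 h4
        obtain ⟨i, hi⟩ := pA_lt_elim hn1 hpa
        obtain ⟨N', R', hNR, hsp, hrk⟩ := exists_decomp (A n - B m n) i
        have hsv0 : 0 ≤ sv (A n - B m n) i := sv_nonneg _ _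
        have hin0 : (0 : ℝ) ≤ ((i : ℕ) : ℝ) / n := by positivity
        refine ⟨⟨N', R'⟩, ?_, ?_, ?_⟩
        · show A n = B m n + N' + R'
          rw [add_assoc, ← hNR]
          abel
        · show specNorm N' ≤ w m
          exact hsp.trans (by linarith)
        · show ((R'.rank : ℝ)) ≤ (n : ℝ) * w m
          have h5 : ((i : ℕ) : ℝ) / n < w m := by linarith
          have h6 : ((R'.rank : ℝ)) ≤ ((i : ℕ) : ℝ) := by exact_mod_cast hrk
          have hn0' : (0 : ℝ) < n := by exact_mod_cast hn1
          rw [div_lt_iff₀ hn0'] at h5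
          nlinarith
    choose nm key using key
    choose! NR h1 h2 h3 using key
    exact ⟨fun m n => (NR m n).1, fun m n => (NR m n).2, nm, w, w, hw0, hw0, hwt, hwt,
      fun m n hn => ⟨h1 m n hn, h2 m n hn, h3 m n hn⟩⟩
  · rintro ⟨N, R, nm, ω, c, hω0, hc0, hωt, hct, hdec⟩
    rw [ENNReal.tendsto_nhds_zero]
    intro ε hε
    set δ : ℝ := (min ε 1).toReal / 2 with hδ
    have hmin_pos : 0 < min ε 1 := lt_min hε zero_lt_one
    have hmin_ne : min ε 1 ≠ ⊤ :=
      ne_of_lt (lt_of_le_of_lt (min_le_right _ _) ENNReal.one_lt_top)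
    have htR : 0 < (min ε 1).toReal := ENNReal.toReal_pos hmin_pos.ne' hmin_ne
    have hδpos : 0 < δ := by rw [hδ]; linarith
    have e1 : ∀ᶠ m in Filter.atTop, ω m < δ / 2 := hωt.eventually_lt_const (by linarith)
    have e2 : ∀ᶠ m in Filter.atTop, c m < δ / 2 := hct.eventually_lt_const (by linarith)
    have e3 : ∀ᶠ m in Filter.atTop, c m < 1 := hct.eventually_lt_const one_pos
    filter_upwards [e1, e2, e3] with m h1 h2 h3
    have hbound : ∀ᶠ n in Filter.atTop,
        ENNReal.ofReal (pA (A n - B m n)) ≤ ENNReal.ofReal δ := by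
      rw [Filter.eventually_atTop]
      refine ⟨nm m + 1, fun n hn => ?_⟩
      have hn' : nm m < n := by omega
      obtain ⟨hA, hsp, hrk⟩ := hdec m n hn'
      have hn0 : 0 < n := by omega
      have hn0' : (0 : ℝ) < n := by exact_mod_cast hn0
      have hC : A n - B m n = N m n + R m n := by rw [hA]; abel
      have hrn : (R m n).rank < n := by
        have hcast : ((R m n).rank : ℝ) < n := lt_of_le_of_lt hrk (by nlinarith)
        exact_mod_cast hcast
      have hp1 : pA (A n - B m n) ≤ (((R m n).rank : ℕ) : ℝ) / n
          + sv (A n - B m n) ⟨(R m n).rank, hrn⟩ := pA_le _ ⟨(R m n).rank, hrn⟩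
      have hp2 : sv (A n - B m n) ⟨(R m n).rank, hrn⟩ ≤ ω m := by
        rw [hC]
        exact sv_le_of_decomp (N m n) (R m n) hrn le_rfl (hω0 m) hsp
      have hp3 : (((R m n).rank : ℕ) : ℝ) / n ≤ c m := by
        rw [div_le_iff₀ hn0']
        linarith
      apply ENNReal.ofReal_le_ofReal
      linarith
    have hlim : dacs A (B m) ≤ ENNReal.ofReal δ := Filter.limsup_le_of_le (h := hbound)
    refine hlim.trans ?_
    calc ENNReal.ofReal δ ≤ ENNReal.ofReal ((min ε 1).toReal) :=
        ENNReal.ofReal_le_ofReal (by rw [hδ]; linarith)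
      _ = min ε 1 := ENNReal.ofReal_toReal hmin_ne
      _ ≤ ε := min_le_left _ _
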